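/- In T(2n, 2m+1, r) with n, m ≥ 1 and 1 ≤ r ≤ 2m+1, the set M₁ consisting of all vertical edges v_{2k,j}v_{2k+1,j} for k ∈ Z_n and j ∈ Z_{2m+1} is a perfect matching, and its forcing number satisfies f(T(2n,2m+1,r), M₁) = n(m+1). -/

import Mathlib

open SimpleGraph

variable {V : Type*}

/-- `S` is a forcing set of the perfect matching `M` of `G`: a subset of the edges of `M`
contained in no other perfect matching of `G`. -/
def IsForcingSet (G : SimpleGraph V) (M : G.Subgraph) (S : Set (Sym2 V)) : Prop :=
  S ⊆ M.edgeSet ∧ ∀ M' : G.Subgraph, M'.IsPerfectMatching → S ⊆ M'.edgeSet → M' = M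

/-- The forcing number of a perfect matching: minimum size of a forcing set. -/
noncomputable def forcingNum (G : SimpleGraph V) (M : G.Subgraph) : ℕ :=
  sInf {k | ∃ S : Set (Sym2 V), IsForcingSet G M S ∧ S.ncard = k}

/-- The maximum forcing number of `G`. -/
noncomputable def maxForcingNum (G : SimpleGraph V) : ℕ :=
  sSup {k | ∃ M : G.Subgraph, M.IsPerfectMatching ∧ forcingNum G M = k}

/-- The edges of the list `l`, read cyclically, alternate in and out of the edge set `M`. -/
def CyclicAlt (M : Set (Sym2 V)) (l : List (Sym2 V)) : Prop :=
  (l ++ l.take 1).Chain' (fun e f => (e ∈ M) ↔ (f ∉ M))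

/-- The quadriculated torus `T(N,M,r)`: vertices `(i,j)` with `i ∈ Z_N`, `j ∈ Z_M`,
horizontal edges `(i,j)(i,j+1)`, vertical edges `(i,j)(i+1,j)` for `i ≠ N-1`, and
wrap-around vertical edges joining row `N-1` to row `0` with a torsion of `r`:
`v_{0,j}` is adjacent to `v_{N-1,(M-r+j) mod M}`. -/
def torus (N M r : ℕ) : SimpleGraph (ZMod N × ZMod M) :=
  SimpleGraph.fromRel (fun u v =>
    (u.1 = v.1 ∧ v.2 = u.2 + 1) ∨
    (u.1 ≠ -1 ∧ v.1 = u.1 + 1 ∧ v.2 = u.2) ∨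
    (u.1 = -1 ∧ v.1 = u.1 + 1 ∧ v.2 = u.2 + (r : ZMod M)))


set_option linter.unusedVariables false



lemma val_add_one_of_lt {N : ℕ} [NeZero N] {x : ZMod N} (h : x.val + 1 < N) :
    (x + 1).val = x.val + 1 := by
  haveI : Fact (1 < N) := ⟨by omega⟩
  rw [ZMod.val_add_of_lt (by rw [ZMod.val_one]; omega), ZMod.val_one]

lemma val_sub_one' {N : ℕ} [NeZero N] {x : ZMod N} (h : x.val ≠ 0) :
    (x - 1).val = x.val - 1 := by
  have hlt := ZMod.val_lt x
  have hx : x - 1 = ((x.val - 1 : ℕ) : ZMod N) := by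
    rw [Nat.cast_sub (by omega), ZMod.natCast_zmod_val, Nat.cast_one]
  rw [hx, ZMod.val_natCast_of_lt (by omega)]

lemma cast_inj_of_lt {N : ℕ} [NeZero N] {a b : ℕ} (ha : a < N) (hb : b < N)
    (h : ((a : ZMod N)) = (b : ZMod N)) : a = b := by
  rw [← ZMod.val_natCast_of_lt ha, ← ZMod.val_natCast_of_lt hb, h]

lemma neg_one_eq_cast {N : ℕ} [NeZero N] : (-1 : ZMod N) = ((N - 1 : ℕ) : ZMod N) := by
  have hN : 0 < N := Nat.pos_of_ne_zero (NeZero.ne N)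
  have h : ((N - 1 : ℕ) : ZMod N) + 1 = 0 := by
    have : ((N - 1 : ℕ) : ZMod N) + ((1:ℕ) : ZMod N) = ((N - 1 + 1 : ℕ) : ZMod N) := by
      rw [Nat.cast_add]
    rw [Nat.cast_one] at this
    rw [this, show N - 1 + 1 = N by omega, ZMod.natCast_self]
  exact (eq_neg_of_add_eq_zero_left h).symm

lemma val_sub_cast {M : ℕ} [NeZero M] (x : ZMod M) (t : ℕ) (ht : t < M) :
    (x - (t : ZMod M)).val = if t ≤ x.val then x.val - t else x.val + M - t := by
  have hlt := ZMod.val_lt x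
  split
  · next h =>
    have hx : x - t = ((x.val - t : ℕ) : ZMod M) := by
      rw [Nat.cast_sub h, ZMod.natCast_zmod_val]
    rw [hx, ZMod.val_natCast_of_lt (by omega)]
  · next h =>
    have hx : x - t = ((x.val + M - t : ℕ) : ZMod M) := by
      rw [Nat.cast_sub (by omega), Nat.cast_add, ZMod.natCast_zmod_val, ZMod.natCast_self]
      ring
    rw [hx, ZMod.val_natCast_of_lt (by omega)]

lemma cast_even_ne_neg_one {n : ℕ} (hn : 0 < n) {a : ℕ} (ha : a < 2 * n) (hae : a % 2 = 0) :
    ((a : ℕ) : ZMod (2 * n)) ≠ -1 := by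
  haveI : NeZero (2 * n) := ⟨by omega⟩
  intro h
  have h0 : ((a + 1 : ℕ) : ZMod (2 * n)) = 0 := by
    rw [Nat.cast_add, Nat.cast_one, h]; ring
  rw [ZMod.natCast_eq_zero_iff] at h0
  have := Nat.le_of_dvd (by omega) h0
  omega

section Torus

variable (n m r : ℕ)

lemma not_even_succ_val {x : ZMod (2 * n)} (hn : 0 < n) (hx : x.val % 2 = 0) :
    ¬ ((x + 1).val % 2 = 0) := by
  haveI : NeZero (2 * n) := ⟨by omega⟩
  have hlt := ZMod.val_lt x
  by_cases h : x.val + 1 < 2 * n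
  · rw [val_add_one_of_lt h]; omega
  · -- x.val = 2*n - 1, even, contradiction
    omega

lemma vert_adj (hn : 0 < n) (hm : 0 < m) {i : ZMod (2 * n)} (hi : i.val % 2 = 0)
    (j : ZMod (2 * m + 1)) : (torus (2 * n) (2 * m + 1) r).Adj (i, j) (i + 1, j) := by
  haveI : NeZero (2 * n) := ⟨by omega⟩
  haveI : Fact (1 < 2 * n) := ⟨by omega⟩
  have hne : i ≠ i + 1 := by
    intro h
    have := left_eq_add.mp h
    have h1 : (1 : ZMod (2 * n)).val = 1 := ZMod.val_one _
    rw [this] at h1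
    simp at h1
  have hni : i ≠ -1 := by
    have := cast_even_ne_neg_one hn (ZMod.val_lt i) hi
    rwa [ZMod.natCast_zmod_val] at this
  exact ⟨by simp [hne], Or.inl (Or.inr (Or.inl ⟨hni, rfl, rfl⟩))⟩

def pm1 (hn : 0 < n) (hm : 0 < m) : (torus (2 * n) (2 * m + 1) r).Subgraph where
  verts := Set.univ
  Adj u v := u.2 = v.2 ∧ ((u.1.val % 2 = 0 ∧ v.1 = u.1 + 1) ∨ (v.1.val % 2 = 0 ∧ u.1 = v.1 + 1))
  adj_sub := by
    rintro ⟨i, j⟩ ⟨i', j'⟩ ⟨h2, (⟨he, h1⟩ | ⟨he, h1⟩)⟩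
    · simp only at h2 h1; subst h2; subst h1; exact vert_adj n m r hn hm he j
    · simp only at h2 h1; subst h2; subst h1
      exact (vert_adj n m r hn hm he j).symm
  edge_vert := fun _ => Set.mem_univ _
  symm := by
    constructor
    rintro u v ⟨h2, (h | h)⟩
    · exact ⟨h2.symm, Or.inr h⟩
    · exact ⟨h2.symm, Or.inl h⟩

lemma pm1_isMatching (hn : 0 < n) (hm : 0 < m) : (pm1 n m r hn hm).IsMatching := by
  haveI : NeZero (2 * n) := ⟨by omega⟩
  rintro ⟨i, j⟩ -
  by_cases hi : i.val % 2 = 0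
  · refine ⟨(i + 1, j), ⟨rfl, Or.inl ⟨hi, rfl⟩⟩, ?_⟩
    rintro ⟨i', j'⟩ ⟨h2, (⟨he, h1⟩ | ⟨he, h1⟩)⟩
    · simp only at h2 h1; subst h2; subst h1; rfl
    · simp only at h2 h1
      exfalso
      exact not_even_succ_val n hn he (h1 ▸ hi)
  · have hv0 : i.val ≠ 0 := by omega
    have hev : (i - 1).val % 2 = 0 := by rw [val_sub_one' hv0]; omega
    refine ⟨(i - 1, j), ⟨rfl, Or.inr ⟨hev, (sub_add_cancel i 1).symm⟩⟩, ?_⟩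
    rintro ⟨i', j'⟩ ⟨h2, (⟨he, h1⟩ | ⟨he, h1⟩)⟩
    · exact absurd he hi
    · simp only at h2 h1; subst h2
      have : i' = i - 1 := by rw [h1]; ring
      rw [this]
  
end Torus


section T2
variable (n m r : ℕ)

lemma torus_adj_cases {u w : ZMod (2 * n) × ZMod (2 * m + 1)}
    (h : (torus (2 * n) (2 * m + 1) r).Adj u w) :
    w = (u.1, u.2 + 1) ∨ w = (u.1, u.2 - 1) ∨
    (u.1 ≠ -1 ∧ w = (u.1 + 1, u.2)) ∨ (u.1 ≠ 0 ∧ w = (u.1 - 1, u.2)) ∨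
    (u.1 = -1 ∧ w = (u.1 + 1, u.2 + (r : ZMod (2 * m + 1)))) ∨
    (u.1 = 0 ∧ w = (u.1 - 1, u.2 - (r : ZMod (2 * m + 1)))) := by
  obtain ⟨hne, h | h⟩ := h
  · rcases h with ⟨h1, h2⟩ | ⟨h1, h2, h3⟩ | ⟨h1, h2, h3⟩
    · exact Or.inl (Prod.ext h1.symm h2)
    · exact Or.inr (Or.inr (Or.inl ⟨h1, Prod.ext h2 h3⟩))
    · exact Or.inr (Or.inr (Or.inr (Or.inr (Or.inl ⟨h1, Prod.ext h2 h3⟩))))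
  · rcases h with ⟨h1, h2⟩ | ⟨h1, h2, h3⟩ | ⟨h1, h2, h3⟩
    · refine Or.inr (Or.inl (Prod.ext h1 ?_))
      rw [h2]; ring
    · refine Or.inr (Or.inr (Or.inr (Or.inl ⟨?_, Prod.ext ?_ h3.symm⟩)))
      · intro h0; rw [h0] at h2; exact h1 (eq_neg_of_add_eq_zero_left h2.symm)
      · rw [h2]; ring
    · refine Or.inr (Or.inr (Or.inr (Or.inr (Or.inr ⟨?_, Prod.ext ?_ ?_⟩))))
      · rw [h2, h1]; ring
      · rw [h2, h1]; ring
      · rw [h3]; ring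

lemma pm1_edgeSet (hn : 0 < n) (hm : 0 < m) :
    (pm1 n m r hn hm).edgeSet = {e | ∃ (k : ℕ) (j : ZMod (2 * m + 1)), k < n ∧
      e = s((((2 * k : ℕ) : ZMod (2 * n)), j), (((2 * k + 1 : ℕ) : ZMod (2 * n)), j))} := by
  haveI : NeZero (2 * n) := ⟨by omega⟩
  ext e
  induction e using Sym2.inductionOn with
  | hf u v =>
    rw [SimpleGraph.Subgraph.mem_edgeSet]
    constructor
    · rintro ⟨h2, (⟨he, h1⟩ | ⟨he, h1⟩)⟩
      · refine ⟨u.1.val / 2, u.2, by have := ZMod.val_lt u.1; omega, ?_⟩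
        have hu1 : ((2 * (u.1.val / 2) : ℕ) : ZMod (2 * n)) = u.1 := by
          rw [show 2 * (u.1.val / 2) = u.1.val by omega, ZMod.natCast_zmod_val]
        have hv1 : ((2 * (u.1.val / 2) + 1 : ℕ) : ZMod (2 * n)) = v.1 := by
          rw [Nat.cast_add, Nat.cast_one, hu1, h1]
        rw [show u = (u.1, u.2) from rfl, show v = (v.1, v.2) from rfl, hu1, ← h2, hv1]
      · refine ⟨v.1.val / 2, v.2, by have := ZMod.val_lt v.1; omega, ?_⟩
        have hu1 : ((2 * (v.1.val / 2) : ℕ) : ZMod (2 * n)) = v.1 := by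
          rw [show 2 * (v.1.val / 2) = v.1.val by omega, ZMod.natCast_zmod_val]
        have hv1 : ((2 * (v.1.val / 2) + 1 : ℕ) : ZMod (2 * n)) = u.1 := by
          rw [Nat.cast_add, Nat.cast_one, hu1, h1]
        rw [show u = (u.1, u.2) from rfl, show v = (v.1, v.2) from rfl, hu1, h2, hv1,
          Sym2.eq_swap]
    · rintro ⟨k, j, hk, he⟩
      rw [Sym2.eq_iff] at he
      have hval : ((2 * k : ℕ) : ZMod (2 * n)).val = 2 * k :=
        ZMod.val_natCast_of_lt (by omega)
      have hcast : ((2 * k + 1 : ℕ) : ZMod (2 * n)) = ((2 * k : ℕ) : ZMod (2 * n)) + 1 := by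
        rw [Nat.cast_add, Nat.cast_one]
      rcases he with ⟨hu, hv⟩ | ⟨hu, hv⟩
      · subst hu; subst hv
        exact ⟨rfl, Or.inl ⟨by rw [hval]; omega, hcast⟩⟩
      · subst hu; subst hv
        exact ⟨rfl, Or.inr ⟨by rw [hval]; omega, hcast⟩⟩

end T2


section T3
variable (n m r : ℕ)

lemma force_unique (hn : 0 < n) (hm : 0 < m)
    (C : ℕ → ZMod (2 * m + 1) → Prop) (μ : ℕ → ZMod (2 * m + 1) → ℕ)
    {M' : (torus (2 * n) (2 * m + 1) r).Subgraph} (hM' : M'.IsPerfectMatching)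
    (hS : ∀ k, k < n → ∀ j, C k j →
      M'.Adj (((2 * k : ℕ) : ZMod (2 * n)), j) (((2 * k + 1 : ℕ) : ZMod (2 * n)), j))
    (hhor : ∀ k, k < n → ∀ j, ¬ C k j → C k (j + 1) ∧ C k (j - 1))
    (hk0 : ∀ j, ¬ C 0 j → (n = 1 ∧ (r : ZMod (2 * m + 1)) = 0) ∨
      C (n - 1) (j - (r : ZMod (2 * m + 1))) ∨
      μ (n - 1) (j - (r : ZMod (2 * m + 1))) < μ 0 j)
    (hks : ∀ k, k + 1 < n → ∀ j, ¬ C (k + 1) j → C k j ∨ μ k j < μ (k + 1) j) :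
    ∀ k, k < n → ∀ j,
      M'.Adj (((2 * k : ℕ) : ZMod (2 * n)), j) (((2 * k + 1 : ℕ) : ZMod (2 * n)), j) := by
  haveI : NeZero (2 * n) := ⟨by omega⟩
  have uniq : ∀ a b c, M'.Adj a b → M'.Adj a c → b = c :=
    fun a b c h1 h2 => (hM'.1 (hM'.2 a)).unique h1 h2
  suffices H : ∀ B k, k < n → ∀ j, μ k j ≤ B →
      M'.Adj (((2 * k : ℕ) : ZMod (2 * n)), j) (((2 * k + 1 : ℕ) : ZMod (2 * n)), j) by
    exact fun k hk j => H (μ k j) k hk j le_rfl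
  intro B
  induction B using Nat.strong_induction_on with
  | _ B IH =>
  intro k hk j hμ
  by_cases hC : C k j
  · exact hS k hk j hC
  obtain ⟨hC1, hC2⟩ := hhor k hk j hC
  obtain ⟨w, hw, -⟩ := hM'.1 (hM'.2 (((2 * k : ℕ) : ZMod (2 * n)), j))
  have hG := M'.adj_sub hw
  have hcast1 : ((2 * k + 1 : ℕ) : ZMod (2 * n)) = ((2 * k : ℕ) : ZMod (2 * n)) + 1 := by
    rw [Nat.cast_add, Nat.cast_one]
  rcases torus_adj_cases n m r hG with hwv | hwv | ⟨_, hwv⟩ | ⟨hne0, hwv⟩ | ⟨hneg, _⟩ |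
      ⟨h0, hwv⟩
  · -- w = (2k, j+1) : covered by S, its partner is (2k+1,j+1)
    exfalso
    rw [hwv] at hw
    have h2 := uniq _ _ _ hw.symm (hS k hk (j + 1) hC1)
    have hfst := congrArg Prod.fst h2
    simp only at hfst
    have := cast_inj_of_lt (show 2 * k < 2 * n by omega) (by omega) hfst
    omega
  · exfalso
    rw [hwv] at hw
    have h2 := uniq _ _ _ hw.symm (hS k hk (j - 1) hC2)
    have hfst := congrArg Prod.fst h2
    simp only at hfst
    have := cast_inj_of_lt (show 2 * k < 2 * n by omega) (by omega) hfst
    omega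
  · -- w = (2k+1, j): the goal
    rw [hwv] at hw
    rwa [hcast1]
  · -- w = (2k-1, j)
    exfalso
    have hkpos : 0 < k := by
      rcases Nat.eq_zero_or_pos k with h | h
      · exfalso; apply hne0; subst h; simp
      · exact h
    have hadj : M'.Adj (((2 * (k - 1) : ℕ) : ZMod (2 * n)), j)
        (((2 * (k - 1) + 1 : ℕ) : ZMod (2 * n)), j) := by
      rcases hks (k - 1) (by omega) j (by rw [show k - 1 + 1 = k by omega]; exact hC) with
        h | h
      · exact hS (k - 1) (by omega) j h
      · rw [show k - 1 + 1 = k by omega] at h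
        exact IH (μ (k - 1) j) (by omega) (k - 1) (by omega) j le_rfl
    have hw1 : ((2 * k : ℕ) : ZMod (2 * n)) - 1 = ((2 * (k - 1) + 1 : ℕ) : ZMod (2 * n)) := by
      rw [show 2 * (k - 1) + 1 = 2 * k - 1 by omega,
        Nat.cast_sub (by omega : 1 ≤ 2 * k), Nat.cast_one]
    rw [hwv, hw1] at hw
    have h2 := uniq _ _ _ hw.symm hadj.symm
    have hfst := congrArg Prod.fst h2
    simp only at hfst
    have := cast_inj_of_lt (show 2 * k < 2 * n by omega) (by omega) hfst
    omega
  · -- u.1 = -1 impossible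
    exact absurd hneg (cast_even_ne_neg_one hn (by omega) (by omega))
  · -- wrap case, k = 0
    have hk0' : k = 0 := by
      have := congrArg ZMod.val h0
      rw [ZMod.val_natCast_of_lt (show 2 * k < 2 * n by omega), ZMod.val_zero] at this
      omega
    subst hk0'
    have hw1 : ((2 * 0 : ℕ) : ZMod (2 * n)) - 1
        = ((2 * (n - 1) + 1 : ℕ) : ZMod (2 * n)) := by
      rw [show (2 * 0 : ℕ) = 0 by omega, Nat.cast_zero, zero_sub,
        show 2 * (n - 1) + 1 = 2 * n - 1 by omega, ← neg_one_eq_cast]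
    have hw' : M'.Adj (((2 * 0 : ℕ) : ZMod (2 * n)), j)
        (((2 * (n - 1) + 1 : ℕ) : ZMod (2 * n)), j - (r : ZMod (2 * m + 1))) := by
      rw [hwv] at hw
      rw [← hw1]
      exact hw
    rcases hk0 j hC with ⟨hn1, hr0⟩ | h'
    · -- n = 1, r ≡ 0 : w is the partner
      subst hn1
      rw [hr0, sub_zero, show 2 * (1 - 1) + 1 = 2 * 0 + 1 by omega] at hw'
      exact hw'
    · have hadj : M'.Adj (((2 * (n - 1) : ℕ) : ZMod (2 * n)), j - (r : ZMod (2 * m + 1)))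
          (((2 * (n - 1) + 1 : ℕ) : ZMod (2 * n)), j - (r : ZMod (2 * m + 1))) := by
        rcases h' with h | h
        · exact hS (n - 1) (by omega) _ h
        · exact IH (μ (n - 1) (j - (r : ZMod (2 * m + 1)))) (by omega) (n - 1) (by omega) _
            le_rfl
      have h2 := uniq _ _ _ hw'.symm hadj.symm
      have hfst := congrArg Prod.fst h2
      simp only at hfst
      have hn1 : n = 1 := by
        have := cast_inj_of_lt (show 2 * 0 < 2 * n by omega) (by omega) hfst
        omega
      subst hn1
      have hsnd := congrArg Prod.snd h2
      simp only at hsnd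
      rw [show 2 * (1 - 1) + 1 = 2 * 0 + 1 by omega, ← hsnd] at hw'
      exact hw'
end T3


section T4
variable (n m r : ℕ)

lemma eq_pm1_of_contains (hn : 0 < n) (hm : 0 < m)
    {M' : (torus (2 * n) (2 * m + 1) r).Subgraph} (hM' : M'.IsPerfectMatching)
    (h : ∀ k, k < n → ∀ j,
      M'.Adj (((2 * k : ℕ) : ZMod (2 * n)), j) (((2 * k + 1 : ℕ) : ZMod (2 * n)), j)) :
    M' = pm1 n m r hn hm := by
  haveI : NeZero (2 * n) := ⟨by omega⟩
  have hcontain : ∀ u v, (pm1 n m r hn hm).Adj u v → M'.Adj u v := by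
    rintro ⟨i, jj⟩ ⟨i', jj'⟩ ⟨h2, (⟨he, h1⟩ | ⟨he, h1⟩)⟩
    · simp only at h2 h1 he; subst h2; subst h1
      have hlt := ZMod.val_lt i
      have hi : ((2 * (i.val / 2) : ℕ) : ZMod (2 * n)) = i := by
        rw [show 2 * (i.val / 2) = i.val by omega, ZMod.natCast_zmod_val]
      have := h (i.val / 2) (by omega) jj
      rw [Nat.cast_add, Nat.cast_one, hi] at this
      exact this
    · simp only at h2 h1 he; subst h2; subst h1
      have hlt := ZMod.val_lt i'
      have hi : ((2 * (i'.val / 2) : ℕ) : ZMod (2 * n)) = i' := by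
        rw [show 2 * (i'.val / 2) = i'.val by omega, ZMod.natCast_zmod_val]
      have := h (i'.val / 2) (by omega) jj
      rw [Nat.cast_add, Nat.cast_one, hi] at this
      exact this.symm
  have hm1 := pm1_isMatching n m r hn hm
  ext u v
  · simp only [pm1, Set.mem_univ, iff_true]
    exact hM'.2 u
  · constructor
    · intro hadj
      obtain ⟨w, hw, -⟩ := hm1 (Set.mem_univ u)
      have := (hM'.1 (hM'.2 u)).unique hadj (hcontain u w hw)
      rwa [this]
    · exact hcontain u v

end T4



section T5
variable (n m r : ℕ)

lemma upper_bound (hn : 0 < n) (hm : 0 < m)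
    (col : ℕ → Fin (m + 1) → ℕ)
    (hlt : ∀ k t, col k t < 2 * m + 1)
    (hinj : ∀ k, Function.Injective (col k))
    (C : ℕ → ZMod (2 * m + 1) → Prop) (μ : ℕ → ZMod (2 * m + 1) → ℕ)
    (hCcol : ∀ k, k < n → ∀ j, C k j → ∃ t : Fin (m + 1), j = ((col k t : ℕ) : ZMod (2 * m + 1)))
    (hhor : ∀ k, k < n → ∀ j, ¬ C k j → C k (j + 1) ∧ C k (j - 1))
    (hk0 : ∀ j, ¬ C 0 j → (n = 1 ∧ (r : ZMod (2 * m + 1)) = 0) ∨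
      C (n - 1) (j - (r : ZMod (2 * m + 1))) ∨
      μ (n - 1) (j - (r : ZMod (2 * m + 1))) < μ 0 j)
    (hks : ∀ k, k + 1 < n → ∀ j, ¬ C (k + 1) j → C k j ∨ μ k j < μ (k + 1) j) :
    ∃ S : Set (Sym2 (ZMod (2 * n) × ZMod (2 * m + 1))),
      IsForcingSet (torus (2 * n) (2 * m + 1) r) (pm1 n m r hn hm) S ∧
      S.ncard = n * (m + 1) := by
  haveI : NeZero (2 * n) := ⟨by omega⟩
  set g : Fin n × Fin (m + 1) → Sym2 (ZMod (2 * n) × ZMod (2 * m + 1)) := fun p =>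
    s(( ((2 * p.1.val : ℕ) : ZMod (2 * n)), ((col p.1.val p.2 : ℕ) : ZMod (2 * m + 1))),
      ( ((2 * p.1.val + 1 : ℕ) : ZMod (2 * n)), ((col p.1.val p.2 : ℕ) : ZMod (2 * m + 1))))
    with hg
  have hginj : Function.Injective g := by
    rintro ⟨k, t⟩ ⟨k', t'⟩ h
    simp only [hg, Sym2.eq_iff, Prod.mk.injEq] at h
    rcases h with ⟨⟨ha, hb⟩, -⟩ | ⟨⟨ha, -⟩, -⟩
    · have hk : 2 * k.val = 2 * k'.val :=
        cast_inj_of_lt (by omega) (by omega) ha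
      have hkk : k = k' := by ext; omega
      subst hkk
      have hc : col k.val t = col k.val t' :=
        cast_inj_of_lt (hlt _ _) (hlt _ _) hb
      rw [hinj k.val hc]
    · exfalso
      have := cast_inj_of_lt (show 2 * k.val < 2 * n by omega)
        (show 2 * k'.val + 1 < 2 * n by omega) ha
      omega
  refine ⟨g '' Set.univ, ⟨?_, ?_⟩, ?_⟩
  · -- S ⊆ edgeSet
    rw [pm1_edgeSet]
    rintro e ⟨⟨k, t⟩, -, rfl⟩
    exact ⟨k.val, ((col k.val t : ℕ) : ZMod (2 * m + 1)), k.2, rfl⟩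
  · -- forcing
    intro M' hPM hsub
    apply eq_pm1_of_contains n m r hn hm hPM
    apply force_unique n m r hn hm C μ hPM _ hhor hk0 hks
    intro k hk j hC
    obtain ⟨t, rfl⟩ := hCcol k hk j hC
    have hmem : g (⟨k, hk⟩, t) ∈ g '' Set.univ := ⟨(⟨k, hk⟩, t), Set.mem_univ _, rfl⟩
    exact SimpleGraph.Subgraph.mem_edgeSet.mp (hsub hmem)
  · rw [Set.ncard_image_of_injective _ hginj, Set.ncard_univ, Nat.card_eq_fintype_card]
    simp [Fintype.card_prod]
end T5


section T6
variable (m r : ℕ)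

lemma orbit_step (hm : 0 < m) (j : ZMod (2 * m + 1)) (s : ℕ) :
    j - (((s + 1) * r : ℕ) : ZMod (2 * m + 1)) - ((r : ℕ) : ZMod (2 * m + 1))
      = j - (((s + 2) * r : ℕ) : ZMod (2 * m + 1)) := by
  push_cast
  ring

lemma exists_even_orbit (hm : 0 < m) (hr1 : 1 ≤ r) (hr2 : r ≤ 2 * m) (j : ZMod (2 * m + 1)) :
    ∃ s : ℕ, ((j - (((s + 1) * r : ℕ) : ZMod (2 * m + 1))).val) % 2 = 0 := by
  haveI : NeZero (2 * m + 1) := ⟨by omega⟩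
  by_contra hodd
  push_neg at hodd
  set x : ℕ → ZMod (2 * m + 1) := fun s => j - (((s + 1) * r : ℕ) : ZMod (2 * m + 1)) with hx
  have hkey : ∀ s, x (s + 1) = x s - ((r : ℕ) : ZMod (2 * m + 1)) := by
    intro s
    rw [hx]
    simp only
    rw [orbit_step m r hm j s]
  have hodd' : ∀ s, (x s).val % 2 ≠ 0 := hodd
  have hvs : ∀ s, (x (s + 1)).val = if r ≤ (x s).val then (x s).val - r
      else (x s).val + (2 * m + 1) - r := by
    intro s
    rw [hkey s]
    exact val_sub_cast (x s) r (by omega)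
  rcases Nat.even_or_odd r with hre | hro
  · -- r even : values decrease by r each step
    have hre' : r % 2 = 0 := Nat.even_iff.mp hre
    have mono : ∀ s, (x s).val + s * r ≤ 2 * m := by
      intro s
      induction s with
      | zero => simpa using Nat.lt_succ_iff.mp (ZMod.val_lt (x 0))
      | succ s ih =>
        have h1 := hodd' s
        have h2 := hodd' (s + 1)
        have hv := hvs s
        have hmul : (s + 1) * r = s * r + r := by ring
        split at hv
        · omega
        · -- wrap : parity contradiction
          exfalso
          have hx1 : (x s).val % 2 ≠ 0 := h1
          have hx2 : (x (s + 1)).val % 2 ≠ 0 := h2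
          omega
    have hfin := mono (m + 1)
    have : 2 * m ≤ m * r := by
      calc 2 * m = m * 2 := by ring
      _ ≤ m * r := Nat.mul_le_mul_left m (by omega)
    have hmul : (m + 1) * r = m * r + r := by ring
    have h0 := hodd' (m + 1)
    omega
  · -- r odd : values increase
    have hro' : r % 2 = 1 := Nat.odd_iff.mp hro
    have mono : ∀ s, s ≤ (x s).val := by
      intro s
      induction s with
      | zero => exact Nat.zero_le _
      | succ s ih =>
        have h1 := hodd' s
        have h2 := hodd' (s + 1)
        have hv := hvs s
        split at hv
        · exfalso; omega
        · omega
    have := mono (2 * m + 1)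
    have := ZMod.val_lt (x (2 * m + 1))
    omega

end T6


section T7
variable (n m r : ℕ)

lemma upperA (hn : 0 < n) (hm : 0 < m) (hr1 : 1 ≤ r) (hr2 : r ≤ 2 * m) :
    ∃ S : Set (Sym2 (ZMod (2 * n) × ZMod (2 * m + 1))),
      IsForcingSet (torus (2 * n) (2 * m + 1) r) (pm1 n m r hn hm) S ∧
      S.ncard = n * (m + 1) := by
  haveI : NeZero (2 * m + 1) := ⟨by omega⟩
  set ci : ZMod (2 * m + 1) → ℕ := fun j => Nat.find (exists_even_orbit m r hm hr1 hr2 j)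
    with hci
  refine upper_bound n m r hn hm (fun _ t => 2 * t.val) ?_ ?_
    (fun _ j => j.val % 2 = 0) (fun k j => ci j * n + k) ?_ ?_ ?_ ?_
  · intro k t
    show 2 * t.val < 2 * m + 1
    have := t.2
    omega
  · intro k t t' h
    have h' : 2 * t.val = 2 * t'.val := h
    ext
    omega
  · -- hCcol
    intro k hk j hC
    replace hC : j.val % 2 = 0 := hC
    have hlt := ZMod.val_lt j
    refine ⟨⟨j.val / 2, by omega⟩, ?_⟩
    show j = ((2 * (j.val / 2) : ℕ) : ZMod (2 * m + 1))
    rw [show 2 * (j.val / 2) = j.val by omega, ZMod.natCast_zmod_val]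
  · -- hhor
    intro k hk j hC
    replace hC : ¬ j.val % 2 = 0 := hC
    have hlt := ZMod.val_lt j
    constructor
    · show (j + 1).val % 2 = 0
      rw [val_add_one_of_lt (by omega)]; omega
    · show (j - 1).val % 2 = 0
      rw [val_sub_one' (by omega)]; omega
  · -- hk0
    intro j hC
    replace hC : ¬ j.val % 2 = 0 := hC
    by_cases hjr : ((j - ((r : ℕ) : ZMod (2 * m + 1))).val) % 2 = 0
    · exact Or.inr (Or.inl hjr)
    · refine Or.inr (Or.inr ?_)
      show ci (j - ((r : ℕ) : ZMod (2 * m + 1))) * n + (n - 1) < ci j * n + 0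
      have hlink : ∀ (a : ZMod (2 * m + 1)) (s : ℕ),
          (a - ((r : ℕ) : ZMod (2 * m + 1))) - (((s + 1) * r : ℕ) : ZMod (2 * m + 1))
            = a - (((s + 2) * r : ℕ) : ZMod (2 * m + 1)) := by
        intro a s; push_cast; ring
      have hspecj : (j - (((ci j + 1) * r : ℕ) : ZMod (2 * m + 1))).val % 2 = 0 :=
        Nat.find_spec (exists_even_orbit m r hm hr1 hr2 j)
      have h1 : ci j ≠ 0 := by
        intro h
        rw [h, show (0 + 1) * r = r by omega] at hspecj
        exact hjr hspecj
      have hle : ci j ≤ ci (j - ((r : ℕ) : ZMod (2 * m + 1))) + 1 := by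
        apply Nat.find_le
        rw [show ci (j - ((r : ℕ) : ZMod (2 * m + 1))) + 1 + 1
          = ci (j - ((r : ℕ) : ZMod (2 * m + 1))) + 2 by omega, ← hlink]
        exact (Nat.find_spec (exists_even_orbit m r hm hr1 hr2
          (j - ((r : ℕ) : ZMod (2 * m + 1)))) :
          ((j - ((r : ℕ) : ZMod (2 * m + 1))) -
            (((ci (j - ((r : ℕ) : ZMod (2 * m + 1))) + 1) * r : ℕ) : ZMod (2 * m + 1))).val % 2 = 0)
      have hge : ci (j - ((r : ℕ) : ZMod (2 * m + 1))) + 1 ≤ ci j := by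
        by_contra h
        push_neg at h
        have hmin := Nat.find_min (exists_even_orbit m r hm hr1 hr2
          (j - ((r : ℕ) : ZMod (2 * m + 1))))
          (show ci j - 1 < ci (j - ((r : ℕ) : ZMod (2 * m + 1))) by omega)
        apply hmin
        rw [hlink j (ci j - 1), show ci j - 1 + 2 = ci j + 1 by omega]
        exact hspecj
      obtain ⟨c', hc'⟩ : ∃ c', ci j = c' + 1 := ⟨ci j - 1, by omega⟩
      have hceq : ci (j - ((r : ℕ) : ZMod (2 * m + 1))) = c' := by omega
      rw [hceq, hc', Nat.succ_mul]
      omega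
  · -- hks
    intro k hk j hC
    refine Or.inr ?_
    show ci j * n + k < ci j * n + (k + 1)
    omega
end T7


section T8
variable (n m : ℕ)

lemma upperB (hn : 0 < n) (hm : 0 < m) :
    ∃ S : Set (Sym2 (ZMod (2 * n) × ZMod (2 * m + 1))),
      IsForcingSet (torus (2 * n) (2 * m + 1) (2 * m + 1)) (pm1 n m (2 * m + 1) hn hm) S ∧
      S.ncard = n * (m + 1) := by
  haveI : NeZero (2 * m + 1) := ⟨by omega⟩
  have hr0 : ((2 * m + 1 : ℕ) : ZMod (2 * m + 1)) = 0 := ZMod.natCast_self _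
  refine upper_bound n m (2 * m + 1) hn hm
    (fun k t => if k = n - 1 then (if t.val = 0 then 0 else 2 * t.val - 1) else 2 * t.val)
    ?_ ?_
    (fun k j => if k = n - 1 then (j.val % 2 = 1 ∨ j.val = 0) else j.val % 2 = 0)
    (fun k _ => k) ?_ ?_ ?_ ?_
  · intro k t
    show (if k = n - 1 then (if t.val = 0 then 0 else 2 * t.val - 1) else 2 * t.val) < 2 * m + 1
    have := t.2
    split <;> [skip; omega]
    split <;> omega
  · intro k t t' h
    simp only at h
    have ht := t.2
    have ht' := t'.2
    ext
    split at h
    · split at h <;> split at h <;> omega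
    · omega
  · -- hCcol
    intro k hk j hC
    replace hC : if k = n - 1 then (j.val % 2 = 1 ∨ j.val = 0) else j.val % 2 = 0 := hC
    have hlt := ZMod.val_lt j
    split at hC
    · next hkn =>
      rcases hC with hodd | h0
      · refine ⟨⟨(j.val + 1) / 2, by omega⟩, ?_⟩
        show j = ((if k = n - 1 then (if (j.val + 1) / 2 = 0 then 0 else 2 * ((j.val + 1) / 2) - 1)
          else 2 * ((j.val + 1) / 2) : ℕ) : ZMod (2 * m + 1))
        rw [if_pos hkn, if_neg (by omega), show 2 * ((j.val + 1) / 2) - 1 = j.val by omega,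
          ZMod.natCast_zmod_val]
      · refine ⟨⟨0, by omega⟩, ?_⟩
        show j = ((if k = n - 1 then (if (0:ℕ) = 0 then 0 else 2 * 0 - 1) else 2 * 0 : ℕ)
          : ZMod (2 * m + 1))
        rw [if_pos hkn, if_pos rfl, Nat.cast_zero, ← ZMod.natCast_zmod_val j, h0,
          Nat.cast_zero]
    · next hkn =>
      refine ⟨⟨j.val / 2, by omega⟩, ?_⟩
      show j = ((if k = n - 1 then (if j.val / 2 = 0 then 0 else 2 * (j.val / 2) - 1)
        else 2 * (j.val / 2) : ℕ) : ZMod (2 * m + 1))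
      rw [if_neg hkn, show 2 * (j.val / 2) = j.val by omega, ZMod.natCast_zmod_val]
  · -- hhor
    intro k hk j hC
    replace hC : ¬ (if k = n - 1 then (j.val % 2 = 1 ∨ j.val = 0) else j.val % 2 = 0) := hC
    have hlt := ZMod.val_lt j
    split at hC
    · next hkn =>
      push_neg at hC
      obtain ⟨hC1, hC2⟩ := hC
      constructor
      · show if k = n - 1 then ((j + 1).val % 2 = 1 ∨ (j + 1).val = 0) else (j + 1).val % 2 = 0
        rw [if_pos hkn]
        by_cases hv : j.val = 2 * m
        · right
          have : j + 1 = ((j.val + 1 : ℕ) : ZMod (2 * m + 1)) := by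
            rw [Nat.cast_add, Nat.cast_one, ZMod.natCast_zmod_val]
          rw [this, hv, show 2 * m + 1 = 2 * m + 1 from rfl, ZMod.natCast_self, ZMod.val_zero]
        · left
          rw [val_add_one_of_lt (by omega)]
          omega
      · show if k = n - 1 then ((j - 1).val % 2 = 1 ∨ (j - 1).val = 0) else (j - 1).val % 2 = 0
        rw [if_pos hkn]
        left
        rw [val_sub_one' (by omega)]
        omega
    · next hkn =>
      constructor
      · show if k = n - 1 then ((j + 1).val % 2 = 1 ∨ (j + 1).val = 0) else (j + 1).val % 2 = 0
        rw [if_neg hkn, val_add_one_of_lt (by omega)]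
        omega
      · show if k = n - 1 then ((j - 1).val % 2 = 1 ∨ (j - 1).val = 0) else (j - 1).val % 2 = 0
        rw [if_neg hkn, val_sub_one' (by omega)]
        omega
  · -- hk0
    intro j hC
    rcases Nat.eq_or_lt_of_le hn with h1 | h1
    · exact Or.inl ⟨h1.symm, hr0⟩
    · refine Or.inr (Or.inl ?_)
      replace hC : ¬ (if (0:ℕ) = n - 1 then (j.val % 2 = 1 ∨ j.val = 0) else j.val % 2 = 0) := hC
      rw [if_neg (by omega)] at hC
      show if n - 1 = n - 1 then ((j - ((2*m+1 : ℕ) : ZMod (2*m+1))).val % 2 = 1 ∨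
        (j - ((2*m+1 : ℕ) : ZMod (2*m+1))).val = 0) else _
      rw [if_pos rfl, hr0, sub_zero]
      left
      omega
  · -- hks
    intro k hk j hC
    refine Or.inr ?_
    show k < k + 1
    omega
end T8


section T9
variable (n m r : ℕ)

lemma horiz_adj (hn : 0 < n) (hm : 0 < m) (i : ZMod (2 * n)) (a : ZMod (2 * m + 1)) :
    (torus (2 * n) (2 * m + 1) r).Adj (i, a) (i, a + 1) := by
  haveI : NeZero (2 * m + 1) := ⟨by omega⟩
  haveI : Fact (1 < 2 * m + 1) := ⟨by omega⟩
  refine ⟨?_, Or.inl (Or.inl ⟨rfl, rfl⟩)⟩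
  intro h
  have h2 := congrArg Prod.snd h
  simp only at h2
  have := left_eq_add.mp h2
  have h1 : (1 : ZMod (2 * m + 1)).val = 1 := ZMod.val_one _
  rw [this] at h1
  simp at h1

lemma col_ne_succ (hm : 0 < m) (a : ZMod (2 * m + 1)) : a ≠ a + 1 := by
  haveI : NeZero (2 * m + 1) := ⟨by omega⟩
  haveI : Fact (1 < 2 * m + 1) := ⟨by omega⟩
  intro h
  have := left_eq_add.mp h
  have h1 : (1 : ZMod (2 * m + 1)).val = 1 := ZMod.val_one _
  rw [this] at h1
  simp at h1

def sqr (k : ℕ) (j : ZMod (2 * m + 1)) (u : ZMod (2 * n) × ZMod (2 * m + 1)) : Prop :=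
  (u.1 = ((2 * k : ℕ) : ZMod (2 * n)) ∨ u.1 = ((2 * k + 1 : ℕ) : ZMod (2 * n))) ∧
  (u.2 = j ∨ u.2 = j + 1)

lemma pm1_adj_even (hn : 0 < n) (hm : 0 < m) {i : ZMod (2 * n)} (hi : i.val % 2 = 0)
    (a : ZMod (2 * m + 1)) : (pm1 n m r hn hm).Adj (i, a) (i + 1, a) :=
  ⟨rfl, Or.inl ⟨hi, rfl⟩⟩

lemma pm1_adj_odd (hn : 0 < n) (hm : 0 < m) {i : ZMod (2 * n)} (hi : i.val % 2 = 1)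
    (a : ZMod (2 * m + 1)) : (pm1 n m r hn hm).Adj (i, a) (i - 1, a) := by
  haveI : NeZero (2 * n) := ⟨by omega⟩
  refine ⟨rfl, Or.inr ⟨?_, (sub_add_cancel i 1).symm⟩⟩
  rw [val_sub_one' (by omega)]
  omega

def flipSq (hn : 0 < n) (hm : 0 < m) (k : ℕ) (j : ZMod (2 * m + 1)) :
    (torus (2 * n) (2 * m + 1) r).Subgraph where
  verts := Set.univ
  Adj u v := ((pm1 n m r hn hm).Adj u v ∧ ¬ sqr n m k j u ∧ ¬ sqr n m k j v) ∨
    (u.1 = v.1 ∧ (u.1 = ((2 * k : ℕ) : ZMod (2 * n)) ∨ u.1 = ((2 * k + 1 : ℕ) : ZMod (2 * n))) ∧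
      ((u.2 = j ∧ v.2 = j + 1) ∨ (u.2 = j + 1 ∧ v.2 = j)))
  adj_sub := by
    rintro ⟨a, b⟩ ⟨c, d⟩ (⟨h, -, -⟩ | ⟨h1, -, (⟨h2, h3⟩ | ⟨h2, h3⟩)⟩)
    · exact (pm1 n m r hn hm).adj_sub h
    · simp only at h1 h2 h3; subst h1; subst h3; rw [h2]
      exact horiz_adj n m r hn hm a j
    · simp only at h1 h2 h3; subst h2; rw [h3, ← h1]
      exact (horiz_adj n m r hn hm a j).symm
  edge_vert := fun _ => Set.mem_univ _
  symm := by
    constructor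
    rintro u v (⟨h, h1, h2⟩ | ⟨h1, h2, (⟨h3, h4⟩ | ⟨h3, h4⟩)⟩)
    · exact Or.inl ⟨h.symm, h2, h1⟩
    · exact Or.inr ⟨h1.symm, h1 ▸ h2, Or.inr ⟨h4, h3⟩⟩
    · exact Or.inr ⟨h1.symm, h1 ▸ h2, Or.inl ⟨h4, h3⟩⟩

lemma flipSq_isPerfectMatching (hn : 0 < n) (hm : 0 < m) (k : ℕ) (hk : k < n)
    (j : ZMod (2 * m + 1)) : (flipSq n m r hn hm k j).IsPerfectMatching := by
  haveI : NeZero (2 * n) := ⟨by omega⟩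
  haveI : NeZero (2 * m + 1) := ⟨by omega⟩
  have hjne := col_ne_succ m hm j
  constructor
  · rintro u -
    by_cases hs : sqr n m k j u
    · obtain ⟨hrow, hcol⟩ := hs
      rcases hcol with hc | hc
      · refine ⟨(u.1, j + 1), Or.inr ⟨rfl, hrow, Or.inl ⟨hc, rfl⟩⟩, ?_⟩
        rintro v (⟨-, hnsq, -⟩ | ⟨h1, -, (⟨-, hb⟩ | ⟨ha, -⟩)⟩)
        · exact absurd ⟨hrow, Or.inl hc⟩ hnsq
        · exact Prod.ext h1.symm hb
        · exact absurd (hc ▸ ha) hjne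
      · refine ⟨(u.1, j), Or.inr ⟨rfl, hrow, Or.inr ⟨hc, rfl⟩⟩, ?_⟩
        rintro v (⟨-, hnsq, -⟩ | ⟨h1, -, (⟨ha, -⟩ | ⟨-, hb⟩)⟩)
        · exact absurd ⟨hrow, Or.inr hc⟩ hnsq
        · exact absurd (ha ▸ hc) hjne
        · exact Prod.ext h1.symm hb
    · obtain ⟨p, hp, hup⟩ := pm1_isMatching n m r hn hm (Set.mem_univ u)
      have hnsp : ¬ sqr n m k j p := by
        intro hsp
        apply hs
        have hpu : (pm1 n m r hn hm).Adj p u := hp.symm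
        rcases hsp.1 with hr | hr
        · have hev : p.1.val % 2 = 0 := by
            rw [hr, ZMod.val_natCast_of_lt (by omega : 2 * k < 2 * n)]; omega
          have hadj2 : (pm1 n m r hn hm).Adj p (p.1 + 1, p.2) :=
            pm1_adj_even n m r hn hm hev p.2
          have heq := ExistsUnique.unique (pm1_isMatching n m r hn hm (Set.mem_univ p))
            hpu hadj2
          rw [heq]
          refine ⟨Or.inr ?_, hsp.2⟩
          rw [hr, Nat.cast_add, Nat.cast_one]
        · have hodd : p.1.val % 2 = 1 := by
            rw [hr, ZMod.val_natCast_of_lt (by omega : 2 * k + 1 < 2 * n)]; omega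
          have hadj2 : (pm1 n m r hn hm).Adj p (p.1 - 1, p.2) :=
            pm1_adj_odd n m r hn hm hodd p.2
          have heq := ExistsUnique.unique (pm1_isMatching n m r hn hm (Set.mem_univ p))
            hpu hadj2
          rw [heq]
          refine ⟨Or.inl ?_, hsp.2⟩
          rw [hr, Nat.cast_add, Nat.cast_one, add_sub_cancel_right]
      refine ⟨p, Or.inl ⟨hp, hs, hnsp⟩, ?_⟩
      rintro v (⟨h, -, -⟩ | ⟨-, hrow, hcol⟩)
      · exact hup v h
      · exact absurd ⟨hrow, hcol.imp And.left And.left⟩ hs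
  · exact fun _ => Set.mem_univ _

end T9


section TA
variable (n m r : ℕ)

lemma lower_bound (hn : 0 < n) (hm : 0 < m) (S : Set (Sym2 (ZMod (2 * n) × ZMod (2 * m + 1))))
    (hF : IsForcingSet (torus (2 * n) (2 * m + 1) r) (pm1 n m r hn hm) S) :
    n * (m + 1) ≤ S.ncard := by
  haveI : NeZero (2 * n) := ⟨by omega⟩
  haveI : NeZero (2 * m + 1) := ⟨by omega⟩
  classical
  set gg : ℕ → ZMod (2 * m + 1) → Sym2 (ZMod (2 * n) × ZMod (2 * m + 1)) := fun k j =>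
    s(( ((2 * k : ℕ) : ZMod (2 * n)), j), ( ((2 * k + 1 : ℕ) : ZMod (2 * n)), j)) with hgg
  set D : ℕ → Finset (ZMod (2 * m + 1)) := fun k =>
    Finset.univ.filter (fun j => gg k j ∈ S) with hD
  have hDmem : ∀ k j, j ∈ D k ↔ gg k j ∈ S := by
    intro k j
    rw [hD]
    simp
  have hrow_ne : ∀ k k' : ℕ, k < n → k' < n →
      ((2 * k : ℕ) : ZMod (2 * n)) ≠ ((2 * k' + 1 : ℕ) : ZMod (2 * n)) := by
    intro k k' hk hk' h
    have := cast_inj_of_lt (show 2 * k < 2 * n by omega) (by omega) h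
    omega
  have hDD : ∀ k, k < n → ∀ j : ZMod (2 * m + 1), j ∈ D k ∨ j + 1 ∈ D k := by
    intro k hk j
    by_contra hcon
    push_neg at hcon
    obtain ⟨h1, h2⟩ := hcon
    have hsub : S ⊆ (flipSq n m r hn hm k j).edgeSet := by
      intro e he
      have hm1 := hF.1 he
      rw [pm1_edgeSet] at hm1
      obtain ⟨k', j', hk', rfl⟩ := hm1
      have hkk : k' = k → (j' ≠ j ∧ j' ≠ j + 1) := by
        intro hkeq
        subst hkeq
        constructor <;> intro hj <;> subst hj
        · exact h1 ((hDmem k' _).mpr he)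
        · exact h2 ((hDmem k' _).mpr he)
      rw [SimpleGraph.Subgraph.mem_edgeSet]
      refine Or.inl ⟨⟨rfl, Or.inl ⟨?_, by rw [Nat.cast_add, Nat.cast_one]⟩⟩, ?_, ?_⟩
      · rw [ZMod.val_natCast_of_lt (show 2 * k' < 2 * n by omega)]; omega
      · rintro ⟨hrowc, hcolc⟩
        simp only at hrowc hcolc
        have hkeq : k' = k := by
          rcases hrowc with h | h
          · have := cast_inj_of_lt (show 2 * k' < 2 * n by omega) (by omega) h
            omega
          · exact absurd h (hrow_ne k' k hk' hk)
        obtain ⟨hu1, hu2⟩ := hkk hkeq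
        rcases hcolc with h | h
        · exact hu1 h
        · exact hu2 h
      · rintro ⟨hrowc, hcolc⟩
        simp only at hrowc hcolc
        have hkeq : k' = k := by
          rcases hrowc with h | h
          · exact absurd h.symm (hrow_ne k k' hk hk')
          · have := cast_inj_of_lt (show 2 * k' + 1 < 2 * n by omega) (by omega) h
            omega
        obtain ⟨hu1, hu2⟩ := hkk hkeq
        rcases hcolc with h | h
        · exact hu1 h
        · exact hu2 h
    have heq := hF.2 _ (flipSq_isPerfectMatching n m r hn hm k hk j) hsub
    have hadj : (flipSq n m r hn hm k j).Adj (((2 * k : ℕ) : ZMod (2 * n)), j)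
        (((2 * k : ℕ) : ZMod (2 * n)), j + 1) := Or.inr ⟨rfl, Or.inl rfl, Or.inl ⟨rfl, rfl⟩⟩
    rw [heq] at hadj
    exact col_ne_succ m hm j hadj.1
  have hcard : ∀ k, k < n → m + 1 ≤ (D k).card := by
    intro k hk
    have hsub : Finset.univ ⊆ D k ∪ (D k).image (fun j => j - 1) := by
      rintro j -
      rcases hDD k hk j with h | h
      · exact Finset.mem_union_left _ h
      · refine Finset.mem_union_right _ (Finset.mem_image.mpr ⟨j + 1, h, by ring⟩)
    have h1 := Finset.card_le_card hsub
    rw [Finset.card_univ, ZMod.card] at h1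
    have h2 := Finset.card_union_le (D k) ((D k).image (fun j => j - 1))
    have h3 := Finset.card_image_le (s := D k) (f := fun j => j - 1)
    omega
  have hfin : S.Finite := Set.toFinite S
  have hdisj : ∀ k ∈ Finset.range n, ∀ k' ∈ Finset.range n, k ≠ k' →
      Disjoint ((D k).image (gg k)) ((D k').image (gg k')) := by
    intro k hk k' hk' hne
    rw [Finset.mem_range] at hk hk'
    rw [Finset.disjoint_left]
    rintro e he he'
    obtain ⟨j, -, rfl⟩ := Finset.mem_image.mp he
    obtain ⟨j', -, heq⟩ := Finset.mem_image.mp he'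
    rw [hgg] at heq
    simp only [Sym2.eq_iff, Prod.mk.injEq] at heq
    rcases heq with ⟨⟨h, -⟩, -⟩ | ⟨⟨h, -⟩, -⟩
    · have := cast_inj_of_lt (show 2 * k' < 2 * n by omega) (show 2 * k < 2 * n by omega) h
      omega
    · exact hrow_ne k' k hk' hk h
  have hginj : ∀ k, k < n → Set.InjOn (gg k) (D k) := by
    intro k hk j hj j' hj' heq
    rw [hgg] at heq
    simp only [Sym2.eq_iff, Prod.mk.injEq] at heq
    rcases heq with ⟨⟨-, h⟩, -⟩ | ⟨⟨h, -⟩, -⟩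
    · exact h
    · exact absurd h (hrow_ne k k hk hk)
  have hbsub : (Finset.range n).biUnion (fun k => (D k).image (gg k)) ⊆ hfin.toFinset := by
    intro e he
    obtain ⟨k, hk, hmem⟩ := Finset.mem_biUnion.mp he
    obtain ⟨j, hj, rfl⟩ := Finset.mem_image.mp hmem
    rw [Set.Finite.mem_toFinset]
    exact (hDmem k j).mp hj
  calc n * (m + 1) = ∑ _k ∈ Finset.range n, (m + 1) := by
        rw [Finset.sum_const, Finset.card_range, smul_eq_mul]
    _ ≤ ∑ k ∈ Finset.range n, ((D k).image (gg k)).card := by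
        apply Finset.sum_le_sum
        intro k hk
        rw [Finset.mem_range] at hk
        rw [Finset.card_image_of_injOn (hginj k hk)]
        exact hcard k hk
    _ = ((Finset.range n).biUnion (fun k => (D k).image (gg k))).card :=
        (Finset.card_biUnion hdisj).symm
    _ ≤ hfin.toFinset.card := Finset.card_le_card hbsub
    _ = S.ncard := (Set.ncard_eq_toFinset_card S hfin).symm
end TA

/-- the set of all vertical edges `v_{2k,j}v_{2k+1,j}` is a perfect matching
`M₁` of `T(2n, 2m+1, r)` with forcing number `n(m+1)`. -/
theorem stmt15 (n m r : ℕ) (hn : 1 ≤ n) (hm : 1 ≤ m) (hr1 : 1 ≤ r) (hr2 : r ≤ 2 * m + 1) :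
    ∃ M₁ : (torus (2 * n) (2 * m + 1) r).Subgraph,
      M₁.verts = Set.univ ∧
      M₁.edgeSet = {e | ∃ (k : ℕ) (j : ZMod (2 * m + 1)), k < n ∧
        e = s((((2 * k : ℕ) : ZMod (2 * n)), j), (((2 * k + 1 : ℕ) : ZMod (2 * n)), j))} ∧
      M₁.IsPerfectMatching ∧
      forcingNum (torus (2 * n) (2 * m + 1) r) M₁ = n * (m + 1) := by
  refine ⟨pm1 n m r hn hm, rfl, pm1_edgeSet n m r hn hm,
    ⟨pm1_isMatching n m r hn hm, fun v => Set.mem_univ v⟩, ?_⟩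
  have hupper : ∃ S : Set (Sym2 (ZMod (2 * n) × ZMod (2 * m + 1))),
      IsForcingSet (torus (2 * n) (2 * m + 1) r) (pm1 n m r hn hm) S ∧
      S.ncard = n * (m + 1) := by
    rcases Nat.lt_or_ge r (2 * m + 1) with h | h
    · exact upperA n m r hn hm hr1 (by omega)
    · have hreq : r = 2 * m + 1 := by omega
      subst hreq
      exact upperB n m hn hm
  obtain ⟨S₀, hS₀, hc₀⟩ := hupper
  unfold forcingNum
  apply le_antisymm
  · exact Nat.sInf_le ⟨S₀, hS₀, hc₀⟩
  · refine le_csInf ⟨n * (m + 1), ?_⟩ ?_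
    · exact ⟨S₀, hS₀, hc₀⟩
    · rintro b ⟨S, hS, rfl⟩
      exact lower_bound n m r hn hm S hS
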